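/- If u is continuous on (0,b], admits a generalized Taylor expansion at 0, and u is not O(x^∞) as x → 0, then min{α ∈ A(u) : a_α ≠ 0} = sup{α ∈ ℝ : lim_{x→0} x^{-α} u(x) = 0}, so the leading exponent with nonzero coefficient is uniquely determined by u. -/

import Mathlib

open Set Finset

/-- A continuous function `u` on `(0,b]` admits a generalized Taylor expansion at `0`
with exponent set `A` (a discrete set bounded from below) and coefficients `a`:
for every `N` there is `C_N` with `|u x - ∑_{α ∈ A, α < N} a α x^α| ≤ C_N x^N` on `(0,b]`. -/
def HasGTE (b : ℝ) (u : ℝ → ℂ) (A : Set ℝ) (a : ℝ → ℂ) : Prop :=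
  BddBelow A ∧
  ∀ N : ℕ, ∃ (s : Finset ℝ) (C : ℝ), (↑s : Set ℝ) = A ∩ Set.Iio (N : ℝ) ∧
    ∀ x ∈ Set.Ioc (0 : ℝ) b,
      ‖u x - ∑ α ∈ s, a α * ((x ^ α : ℝ) : ℂ)‖ ≤ C * x ^ (N : ℝ)


lemma aux_rpow_tendsto {p : ℝ} (hp : 0 < p) :
    Filter.Tendsto (fun x : ℝ => x ^ p) (nhdsWithin 0 (Set.Ioi 0)) (nhds 0) := by
  have h := (Real.continuousAt_rpow_const 0 p (Or.inr hp.le)).continuousWithinAt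
    (s := Set.Ioi (0:ℝ))
  simpa [ContinuousWithinAt, Real.zero_rpow hp.ne'] using h

/-- If `u` has a generalized Taylor expansion and is not `O(x^∞)` at `0`, then the
least exponent with nonzero coefficient equals
`sup {α : x^{-α} u(x) → 0 as x → 0⁺}`; in particular it is determined by `u`. -/
theorem gte_leading_exponent (b : ℝ) (hb : 0 < b) (u : ℝ → ℂ)
    (hu : ContinuousOn u (Set.Ioc 0 b))
    (A : Set ℝ) (a : ℝ → ℂ) (hg : HasGTE b u A a)
    (hnot : ¬ ∀ N : ℕ, ∃ C : ℝ, ∀ x ∈ Set.Ioc (0 : ℝ) b,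
      ‖u x‖ ≤ C * x ^ (N : ℝ))
    (α₀ : ℝ) (hmin : IsLeast {α | α ∈ A ∧ a α ≠ 0} α₀) :
    α₀ = sSup {α : ℝ | Filter.Tendsto (fun x : ℝ => ((x ^ (-α) : ℝ) : ℂ) * u x)
      (nhdsWithin 0 (Set.Ioi 0)) (nhds 0)} := by
  -- Key fact: x^{-α₀} u x → a α₀ as x → 0⁺.
  have keyA : Filter.Tendsto (fun x : ℝ => ((x ^ (-α₀) : ℝ) : ℂ) * u x)
      (nhdsWithin 0 (Set.Ioi 0)) (nhds (a α₀)) := by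
    obtain ⟨N, hN⟩ := exists_nat_gt α₀
    obtain ⟨s, C, hs, hC⟩ := hg.2 N
    have hmem : α₀ ∈ s := by
      rw [← Finset.mem_coe, hs]; exact ⟨hmin.1.1, hN⟩
    -- the partial sum, renormalized, tends to a α₀
    have hsum : Filter.Tendsto (fun x : ℝ => ∑ β ∈ s, a β * ((x ^ (β - α₀) : ℝ) : ℂ))
        (nhdsWithin 0 (Set.Ioi 0)) (nhds (a α₀)) := by
      have hlim : (∑ β ∈ s, (if β = α₀ then a α₀ else 0)) = a α₀ := by
        rw [Finset.sum_ite_eq' s α₀ (fun _ => a α₀)]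
        simp [hmem]
      rw [← hlim]
      refine tendsto_finset_sum _ (fun β hβ => ?_)
      by_cases hβ0 : β = α₀
      · subst hβ0
        simpa [Real.rpow_zero] using
          (tendsto_const_nhds :
            Filter.Tendsto (fun _ : ℝ => a β) (nhdsWithin 0 (Set.Ioi 0)) (nhds (a β)))
      · simp only [hβ0, if_false]
        by_cases haβ : a β = 0
        · simpa [haβ] using (tendsto_const_nhds :
            Filter.Tendsto (fun _ : ℝ => (0:ℂ)) (nhdsWithin 0 (Set.Ioi 0)) (nhds 0))
        · have hβA : β ∈ A := by
            have := (hs ▸ Finset.mem_coe.2 hβ : β ∈ A ∩ Set.Iio (N:ℝ)); exact this.1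
          have hle : α₀ ≤ β := hmin.2 ⟨hβA, haβ⟩
          have hlt : α₀ < β := lt_of_le_of_ne hle (Ne.symm hβ0)
          have h1 : Filter.Tendsto (fun x : ℝ => ((x ^ (β - α₀) : ℝ) : ℂ))
              (nhdsWithin 0 (Set.Ioi 0)) (nhds 0) := by
            have := (Complex.continuous_ofReal.tendsto 0).comp
              (aux_rpow_tendsto (sub_pos.2 hlt))
            simpa [Function.comp_def] using this
          simpa using h1.const_mul (a β)
    -- the error term tends to 0
    have herr : Filter.Tendsto
        (fun x : ℝ => ((x ^ (-α₀) : ℝ) : ℂ) * u x - ∑ β ∈ s, a β * ((x ^ (β - α₀) : ℝ) : ℂ))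
        (nhdsWithin 0 (Set.Ioi 0)) (nhds 0) := by
      have hmemb : Set.Ioo (0:ℝ) b ∈ nhdsWithin (0:ℝ) (Set.Ioi 0) :=
        Ioo_mem_nhdsGT_of_mem ⟨le_refl _, hb⟩
      refine squeeze_zero_norm' (a := fun x => C * x ^ ((N:ℝ) - α₀)) ?_ ?_
      · filter_upwards [hmemb] with x hx
        have hx0 : (0:ℝ) < x := hx.1
        have heq : ((x ^ (-α₀) : ℝ) : ℂ) * u x - ∑ β ∈ s, a β * ((x ^ (β - α₀) : ℝ) : ℂ)
            = ((x ^ (-α₀) : ℝ) : ℂ) * (u x - ∑ β ∈ s, a β * ((x ^ β : ℝ) : ℂ)) := by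
          rw [mul_sub, Finset.mul_sum]
          congr 1
          refine Finset.sum_congr rfl (fun β _ => ?_)
          have : (x : ℝ) ^ (β - α₀) = x ^ (-α₀) * x ^ β := by
            rw [← Real.rpow_add hx0]; ring_nf
          rw [this]; push_cast; ring
        rw [heq]
        have hb1 : ‖u x - ∑ β ∈ s, a β * ((x ^ β : ℝ) : ℂ)‖ ≤ C * x ^ (N:ℝ) :=
          hC x ⟨hx0, hx.2.le⟩
        have hxp : (0:ℝ) ≤ x ^ (-α₀) := (Real.rpow_pos_of_pos hx0 _).le
        calc ‖((x ^ (-α₀) : ℝ) : ℂ) * (u x - ∑ β ∈ s, a β * ((x ^ β : ℝ) : ℂ))‖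
            = x ^ (-α₀) * ‖u x - ∑ β ∈ s, a β * ((x ^ β : ℝ) : ℂ)‖ := by
              rw [norm_mul, Complex.norm_real, Real.norm_of_nonneg hxp]
          _ ≤ x ^ (-α₀) * (C * x ^ (N:ℝ)) := by
              exact mul_le_mul_of_nonneg_left hb1 hxp
          _ = C * x ^ ((N:ℝ) - α₀) := by
              rw [Real.rpow_sub hx0, Real.rpow_neg hx0.le]
              field_simp
      · have hpos : (0:ℝ) < (N:ℝ) - α₀ := sub_pos.2 hN
        have := (aux_rpow_tendsto hpos).const_mul C
        simpa using this
    have := herr.add hsum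
    simp only [sub_add_cancel, zero_add] at this
    exact this
  -- The set equals Iio α₀
  have hset : {α : ℝ | Filter.Tendsto (fun x : ℝ => ((x ^ (-α) : ℝ) : ℂ) * u x)
      (nhdsWithin 0 (Set.Ioi 0)) (nhds 0)} = Set.Iio α₀ := by
    ext α
    simp only [Set.mem_setOf_eq, Set.mem_Iio]
    constructor
    · intro htend
      by_contra hge
      push_neg at hge  -- α₀ ≤ α
      -- then x^{-α₀} u x → 0, contradicting keyA
      have h2 : Filter.Tendsto (fun x : ℝ => ((x ^ (α - α₀) : ℝ) : ℂ) *
          (((x ^ (-α) : ℝ) : ℂ) * u x)) (nhdsWithin 0 (Set.Ioi 0)) (nhds 0) := by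
        rcases eq_or_lt_of_le hge with heq | hlt
        · subst heq
          simpa [sub_self, Real.rpow_zero] using htend
        · have h1 : Filter.Tendsto (fun x : ℝ => ((x ^ (α - α₀) : ℝ) : ℂ))
              (nhdsWithin 0 (Set.Ioi 0)) (nhds 0) := by
            have := (Complex.continuous_ofReal.tendsto 0).comp
              (aux_rpow_tendsto (sub_pos.2 hlt))
            simpa [Function.comp_def] using this
          simpa using h1.mul htend
      have hcongr : Filter.Tendsto (fun x : ℝ => ((x ^ (-α₀) : ℝ) : ℂ) * u x)
          (nhdsWithin 0 (Set.Ioi 0)) (nhds 0) := by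
        refine h2.congr' ?_
        filter_upwards [self_mem_nhdsWithin] with x (hx : x ∈ Set.Ioi (0:ℝ))
        have hx0 : (0:ℝ) < x := hx
        have : (x : ℝ) ^ (α - α₀) * x ^ (-α) = x ^ (-α₀) := by
          rw [← Real.rpow_add hx0]; ring_nf
        calc ((x ^ (α - α₀) : ℝ) : ℂ) * (((x ^ (-α) : ℝ) : ℂ) * u x)
            = ((x ^ (α - α₀) * x ^ (-α) : ℝ) : ℂ) * u x := by push_cast; ring
          _ = ((x ^ (-α₀) : ℝ) : ℂ) * u x := by rw [this]
      have : a α₀ = 0 := tendsto_nhds_unique keyA hcongr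
      exact hmin.1.2 this
    · intro hlt
      have h1 : Filter.Tendsto (fun x : ℝ => ((x ^ (α₀ - α) : ℝ) : ℂ))
          (nhdsWithin 0 (Set.Ioi 0)) (nhds 0) := by
        have := (Complex.continuous_ofReal.tendsto 0).comp
          (aux_rpow_tendsto (sub_pos.2 hlt))
        simpa [Function.comp_def] using this
      have h2 := h1.mul keyA
      rw [zero_mul] at h2
      refine h2.congr' ?_
      filter_upwards [self_mem_nhdsWithin] with x (hx : x ∈ Set.Ioi (0:ℝ))
      have hx0 : (0:ℝ) < x := hx
      have : (x : ℝ) ^ (α₀ - α) * x ^ (-α₀) = x ^ (-α) := by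
        rw [← Real.rpow_add hx0]; ring_nf
      calc ((x ^ (α₀ - α) : ℝ) : ℂ) * (((x ^ (-α₀) : ℝ) : ℂ) * u x)
          = ((x ^ (α₀ - α) * x ^ (-α₀) : ℝ) : ℂ) * u x := by push_cast; ring
        _ = ((x ^ (-α) : ℝ) : ℂ) * u x := by rw [this]
  rw [hset, csSup_Iio]
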